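/- Let a ∈ ℝ, and consider V(x,y) = (1/2)(x² + y²) + (a·y + x)³. If (x,y) : ℝ → ℝ² satisfies ẍ = -∂V/∂x, ÿ = -∂V/∂y, then the quantity I(t) = sin t · (a·ẋ(t) - ẏ(t)) - cos t · (a·x(t) - y(t)) is constant in t. -/

import Mathlib

theorem stmt_19 (a : ℝ) (x y : ℝ → ℝ)
    (hx : Differentiable ℝ x) (hx' : Differentiable ℝ (deriv x))
    (hy : Differentiable ℝ y) (hy' : Differentiable ℝ (deriv y))
    (hxeq : ∀ t, deriv (deriv x) t = -(x t + 3 * (a * y t + x t)^2))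
    (hyeq : ∀ t, deriv (deriv y) t = -(y t + 3 * a * (a * y t + x t)^2)) :
    ∀ t s : ℝ,
      Real.sin t * (a * deriv x t - deriv y t) - Real.cos t * (a * x t - y t) =
      Real.sin s * (a * deriv x s - deriv y s) - Real.cos s * (a * x s - y s) := by
  have key : ∀ t s : ℝ,
      (fun t => Real.sin t * (a * deriv x t - deriv y t)
        - Real.cos t * (a * x t - y t)) t =
      (fun t => Real.sin t * (a * deriv x t - deriv y t)
        - Real.cos t * (a * x t - y t)) s := by
    apply is_const_of_deriv_eq_zero
    · exact (Real.differentiable_sin.mul ((hx'.const_mul a).sub hy')).sub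
        (Real.differentiable_cos.mul ((hx.const_mul a).sub hy))
    · intro t
      have h1 : HasDerivAt (fun t => Real.sin t * (a * deriv x t - deriv y t))
          (Real.cos t * (a * deriv x t - deriv y t)
            + Real.sin t * (a * deriv (deriv x) t - deriv (deriv y) t)) t :=
        (Real.hasDerivAt_sin t).mul
          (((hx'.const_mul a).sub hy').differentiableAt.hasDerivAt.congr_deriv (by
            rw [deriv_sub, deriv_const_mul]
            · exact hx'.differentiableAt
            · exact (hx'.const_mul a).differentiableAt
            · exact hy'.differentiableAt))
      have h2 : HasDerivAt (fun t => Real.cos t * (a * x t - y t))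
          (-Real.sin t * (a * x t - y t)
            + Real.cos t * (a * deriv x t - deriv y t)) t :=
        (Real.hasDerivAt_cos t).mul
          (((hx.const_mul a).sub hy).differentiableAt.hasDerivAt.congr_deriv (by
            rw [deriv_sub, deriv_const_mul]
            · exact hx.differentiableAt
            · exact (hx.const_mul a).differentiableAt
            · exact hy.differentiableAt))
      have : deriv (fun t => Real.sin t * (a * deriv x t - deriv y t)
          - Real.cos t * (a * x t - y t)) t = _ := (h1.sub h2).deriv
      rw [this, hxeq t, hyeq t]
      ring
  exact key
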